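/- Theorem (variant with scale invariance): a bibliometric index f satisfies monotonicity, uniform single citation, scale invariance, and uniform equivalence if and only if f is the rec-index. -/

import Mathlib

/-- A citation vector: a finite nonincreasing list of positive integers. -/
def CitVec (x : List ℕ) : Prop :=
  (∀ a ∈ x, 0 < a) ∧ List.Pairwise (· ≥ ·) x

/-- The rec-index: max over 1 ≤ i ≤ n of i·x_i (0 for the empty vector). -/
def recIdx (x : List ℕ) : ℕ :=
  ((List.range x.length).map (fun i => (i + 1) * x.getD i 0)).foldr max 0

/-- Domination: u ⊑ x. -/
def Dom (u x : List ℕ) : Prop :=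
  u.length ≤ x.length ∧ ∀ i < u.length, u.getD i 0 ≤ x.getD i 0

/-- Uniform: all entries equal. -/
def Uniform (x : List ℕ) : Prop := ∀ a ∈ x, ∀ b ∈ x, a = b

/-- x^[k]: add one citation to publication k (1-indexed; append a 1 if k = n+1). -/
def incr (x : List ℕ) (k : ℕ) : List ℕ :=
  if k ≤ x.length then x.set (k - 1) (x.getD (k - 1) 0 + 1) else x ++ [1]

/-- k is the smallest index j with x_j = x_k (taking x_{n+1} = 0);
equivalently all earlier entries are strictly larger. -/
def MinIndex (x : List ℕ) (k : ℕ) : Prop :=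
  1 ≤ k ∧ k ≤ x.length + 1 ∧ ∀ j, 1 ≤ j → j < k → x.getD (k - 1) 0 < x.getD (j - 1) 0

lemma foldr_max_le (l : List ℕ) (m : ℕ) (h : ∀ a ∈ l, a ≤ m) : l.foldr max 0 ≤ m := by
  induction l with
  | nil => simp
  | cons b t ih =>
    simp only [List.foldr_cons, max_le_iff]
    exact ⟨h b (List.mem_cons_self), ih fun a ha => h a (List.mem_cons_of_mem _ ha)⟩

lemma le_foldr_max (l : List ℕ) (a : ℕ) (ha : a ∈ l) : a ≤ l.foldr max 0 := by
  induction l with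
  | nil => simp at ha
  | cons b t ih =>
    rcases List.mem_cons.1 ha with h | h
    · simp [h]
    · exact le_trans (ih h) (le_max_right _ _)

lemma foldr_max_mem (l : List ℕ) : l.foldr max 0 = 0 ∨ l.foldr max 0 ∈ l := by
  induction l with
  | nil => simp
  | cons b t ih =>
    simp only [List.foldr_cons]
    rcases le_total b (t.foldr max 0) with h | h
    · rw [max_eq_right h]
      rcases ih with h0 | hm
      · left; exact h0
      · right; exact List.mem_cons_of_mem _ hm
    · rw [max_eq_left h]; right; exact List.mem_cons_self

lemma term_le_recIdx (x : List ℕ) (i : ℕ) (hi : i < x.length) :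
    (i + 1) * x.getD i 0 ≤ recIdx x := by
  apply le_foldr_max
  exact List.mem_map.2 ⟨i, List.mem_range.2 hi, rfl⟩

lemma recIdx_le (x : List ℕ) (m : ℕ) (h : ∀ i < x.length, (i + 1) * x.getD i 0 ≤ m) :
    recIdx x ≤ m := by
  apply foldr_max_le
  intro a ha
  rcases List.mem_map.1 ha with ⟨i, hi, rfl⟩
  exact h i (List.mem_range.1 hi)

lemma recIdx_cases (x : List ℕ) :
    recIdx x = 0 ∨ ∃ i, i < x.length ∧ recIdx x = (i + 1) * x.getD i 0 := by
  rcases foldr_max_mem ((List.range x.length).map (fun i => (i + 1) * x.getD i 0)) with h | h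
  · left; exact h
  · right
    rcases List.mem_map.1 h with ⟨i, hi, he⟩
    exact ⟨i, List.mem_range.1 hi, he.symm⟩

lemma sorted_getD {x : List ℕ} (hx : List.Pairwise (· ≥ ·) x) {i j : ℕ}
    (hij : j ≤ i) (hi : i < x.length) : x.getD i 0 ≤ x.getD j 0 := by
  rw [List.getD_eq_getElem x 0 hi, List.getD_eq_getElem x 0 (lt_of_le_of_lt hij hi)]
  exact hx.rel_get_of_le (a := ⟨j, lt_of_le_of_lt hij hi⟩) (b := ⟨i, hi⟩) hij

lemma citvec_replicate (k a : ℕ) (ha : 0 < a) : CitVec (List.replicate k a) := by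
  constructor
  · intro b hb; rw [List.eq_of_mem_replicate hb]; exact ha
  · induction k with
    | zero => simp
    | succ n ih =>
      rw [List.replicate_succ]
      exact List.pairwise_cons.2 ⟨fun b hb => le_of_eq (List.eq_of_mem_replicate hb), ih⟩

lemma getD_replicate {k a : ℕ} (i : ℕ) (hi : i < k) :
    (List.replicate k a).getD i 0 = a := by
  rw [List.getD_eq_getElem _ 0 (by simpa using hi)]
  simp

lemma recIdx_replicate (k a : ℕ) : recIdx (List.replicate k a) = k * a := by
  apply le_antisymm
  · apply recIdx_le
    intro i hi
    simp only [List.length_replicate] at hi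
    rw [getD_replicate i hi]
    exact Nat.mul_le_mul_right a hi
  · cases k with
    | zero => simp
    | succ n =>
      have h := term_le_recIdx (List.replicate (n + 1) a) n (by simp)
      rwa [getD_replicate n (Nat.lt_succ_self n)] at h

lemma dom_replicate {x : List ℕ} (hx : List.Pairwise (· ≥ ·) x) {i : ℕ} (hi : i < x.length) :
    Dom (List.replicate (i + 1) (x.getD i 0)) x := by
  constructor
  · simpa using hi
  · intro j hj
    simp only [List.length_replicate] at hj
    rw [getD_replicate j hj]
    exact sorted_getD hx (Nat.lt_succ_iff.1 hj) hi

lemma getD_pos {x : List ℕ} (hx : CitVec x) {i : ℕ} (hi : i < x.length) :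
    0 < x.getD i 0 := by
  rw [List.getD_eq_getElem x 0 hi]
  exact hx.1 _ (List.getElem_mem hi)

lemma recIdx_map_mul (C : ℕ) (x : List ℕ) :
    recIdx (x.map (fun a => C * a)) = C * recIdx x := by
  have hlen : (x.map (fun a => C * a)).length = x.length := by simp
  have hgetD : ∀ i < x.length, (x.map (fun a => C * a)).getD i 0 = C * x.getD i 0 := by
    intro i hi
    rw [List.getD_eq_getElem _ 0 (by simpa [hlen] using hi), List.getD_eq_getElem x 0 hi,
      List.getElem_map]
  apply le_antisymm
  · apply recIdx_le
    intro i hi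
    rw [hlen] at hi
    rw [hgetD i hi, ← Nat.mul_assoc, Nat.mul_comm (i + 1) C, Nat.mul_assoc]
    exact Nat.mul_le_mul_left C (term_le_recIdx x i hi)
  · rcases recIdx_cases x with h0 | ⟨i, hi, he⟩
    · simp [h0]
    · rw [he, ← Nat.mul_assoc, Nat.mul_comm C (i + 1), Nat.mul_assoc, ← hgetD i hi]
      exact term_le_recIdx _ i (by simpa [hlen] using hi)

theorem rec_characterisation_SI (f : List ℕ → ℝ)
    (hnonneg : ∀ x, CitVec x → 0 ≤ f x) (hbase : f [] = 0) :
    ((∀ x y, CitVec x → CitVec y → Dom x y → f x ≤ f y) ∧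
     (∀ x, CitVec x → (∀ a ∈ x, a = 1) → f x = x.length) ∧
     (∀ x C, CitVec x → 0 < C → f (x.map (fun a => C * a)) = C * f x) ∧
     (∀ x, CitVec x → ∃ u, CitVec u ∧ Uniform u ∧ Dom u x ∧ f x = f u)) ↔
    (∀ x, CitVec x → f x = recIdx x) := by
  constructor
  · rintro ⟨hmono, husc, hsi, hue⟩ x hx
    -- key: value of f on uniform vectors
    have hrep : ∀ k c : ℕ, 0 < c → f (List.replicate k c) = (c : ℝ) * k := by
      intro k c hc
      have h1 : List.replicate k c = (List.replicate k 1).map (fun a => c * a) := by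
        simp
      rw [h1, hsi _ c (citvec_replicate k 1 one_pos) hc,
        husc _ (citvec_replicate k 1 one_pos) (fun a ha => List.eq_of_mem_replicate ha)]
      simp
    have hlow : (recIdx x : ℝ) ≤ f x := by
      rcases recIdx_cases x with h0 | ⟨i, hi, he⟩
      · rw [h0]; exact_mod_cast hnonneg x hx
      · have hc : 0 < x.getD i 0 := getD_pos hx hi
        have h1 := hmono _ x (citvec_replicate (i + 1) _ hc) hx (dom_replicate hx.2 hi)
        rw [hrep (i + 1) _ hc] at h1
        rw [he]
        push_cast at h1 ⊢
        linarith
    have hupp : f x ≤ (recIdx x : ℝ) := by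
      obtain ⟨u, hu, hunif, hdom, hfx⟩ := hue x hx
      cases u with
      | nil =>
        rw [hfx, hbase]
        exact_mod_cast Nat.zero_le _
      | cons b t =>
        have hub : ∀ a ∈ b :: t, a = b := fun a ha => hunif a ha b (List.mem_cons_self)
        have hrepl := List.eq_replicate_of_mem hub
        have hb : 0 < b := hu.1 b (List.mem_cons_self)
        have hk1 : 0 < (b :: t).length := by simp
        set k := (b :: t).length with hk
        have hfu : f (b :: t) = (b : ℝ) * k := by
          rw [hrepl]; rw [hrep k b hb]
        have hkx : k ≤ x.length := hdom.1
        have hklt : k - 1 < x.length := lt_of_lt_of_le (Nat.sub_lt hk1 one_pos) hkx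
        have hdg : (b :: t).getD (k - 1) 0 = b := by
          rw [hrepl]; exact getD_replicate (k - 1) (Nat.sub_lt hk1 one_pos)
        have hble : b ≤ x.getD (k - 1) 0 := by
          have := hdom.2 (k - 1) (Nat.sub_lt hk1 one_pos)
          rwa [hdg] at this
        have hterm : b * k ≤ recIdx x := by
          have h2 : (k - 1 + 1) * x.getD (k - 1) 0 ≤ recIdx x := term_le_recIdx x _ hklt
          rw [Nat.sub_add_cancel hk1] at h2
          calc b * k = k * b := Nat.mul_comm _ _
            _ ≤ k * x.getD (k - 1) 0 := Nat.mul_le_mul_left k hble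
            _ ≤ recIdx x := h2
        rw [hfx, hfu]
        exact_mod_cast hterm
    linarith
  · intro hrec
    refine ⟨?_, ?_, ?_, ?_⟩
    · intro x y hx hy hdom
      rw [hrec x hx, hrec y hy]
      exact_mod_cast recIdx_le x (recIdx y) fun i hi =>
        le_trans (Nat.mul_le_mul_left _ (hdom.2 i hi))
          (term_le_recIdx y i (lt_of_lt_of_le hi hdom.1))
    · intro x hx h1
      rw [hrec x hx, List.eq_replicate_of_mem h1, recIdx_replicate]
      simp
    · intro x C hx hC
      have hmap : CitVec (x.map (fun a => C * a)) := by
        constructor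
        · intro a ha
          rcases List.mem_map.1 ha with ⟨b, hb, rfl⟩
          exact Nat.mul_pos hC (hx.1 b hb)
        · exact hx.2.map _ fun a b h => Nat.mul_le_mul_left C h
      rw [hrec _ hmap, hrec x hx, recIdx_map_mul]
      push_cast
      ring
    · intro x hx
      rcases recIdx_cases x with h0 | ⟨i, hi, he⟩
      · refine ⟨[], ⟨by simp, by simp⟩, by simp [Uniform], ⟨Nat.zero_le _, by simp⟩, ?_⟩
        rw [hrec x hx, h0, hbase]; simp
      · have hc : 0 < x.getD i 0 := getD_pos hx hi
        refine ⟨List.replicate (i + 1) (x.getD i 0), citvec_replicate _ _ hc,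
          fun a ha b hb => by
            rw [List.eq_of_mem_replicate ha, List.eq_of_mem_replicate hb],
          dom_replicate hx.2 hi, ?_⟩
        rw [hrec x hx, hrec _ (citvec_replicate _ _ hc), recIdx_replicate, he]
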